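/- For a finitely generated ℕ^r-graded module M over S = K[x_1,…,x_r], there exists a polynomial P ∈ ℤ[t_1,…,t_r] such that, as an identity of formal power series in ℤ[[t_1,…,t_r]], ∏_{i=1}^r (1−t_i) · HS(M,t) = P(t_1,…,t_r); that is, HS(M,t) = P(t_1,…,t_r)/∏_{i=1}^r (1−t_i). -/

import Mathlib

open Finset
noncomputable section
variable {r : ℕ}

/-- all-ones power series -/
def allOnes (r : ℕ) : MvPowerSeries (Fin r) ℤ := fun _ => 1

/-- indicator of the principal upset at `a` -/
def upInd (a : Fin r →₀ ℕ) : MvPowerSeries (Fin r) ℤ :=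
  fun u => if a ≤ u then 1 else 0

lemma coeff_allOnes (u : Fin r →₀ ℕ) : MvPowerSeries.coeff u (allOnes r) = 1 := rfl
lemma coeff_upInd (a u : Fin r →₀ ℕ) :
    MvPowerSeries.coeff u (upInd a) = if a ≤ u then 1 else 0 := rfl

lemma upInd_eq (a : Fin r →₀ ℕ) :
    upInd a = (MvPowerSeries.monomial a 1) * allOnes r := by
  ext u
  rw [MvPowerSeries.coeff_monomial_mul, coeff_upInd]
  split <;> simp [coeff_allOnes]

lemma prod_X_eq (T : Finset (Fin r)) :
    (∏ i ∈ T, (MvPowerSeries.X i : MvPowerSeries (Fin r) ℤ)) =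
      MvPowerSeries.monomial (∑ i ∈ T, Finsupp.single i 1) 1 := by
  classical
  induction T using Finset.induction_on with
  | empty => simp [MvPowerSeries.monomial_zero_one]
  | insert _ _ h ih =>
      rw [Finset.prod_insert h, Finset.sum_insert h, ih, MvPowerSeries.X_def,
        MvPowerSeries.monomial_mul_monomial, one_mul]

lemma eT_apply (T : Finset (Fin r)) (j : Fin r) :
    (∑ i ∈ T, Finsupp.single i 1 : Fin r →₀ ℕ) j = if j ∈ T then 1 else 0 := by
  classical
  rw [Finset.sum_apply']
  simp [Finsupp.single_apply, eq_comm]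

lemma eT_le_iff (T : Finset (Fin r)) (u : Fin r →₀ ℕ) :
    (∑ i ∈ T, Finsupp.single i 1 : Fin r →₀ ℕ) ≤ u ↔ T ⊆ u.support := by
  classical
  rw [Finsupp.le_def]
  constructor
  · intro h j hj
    have := h j
    rw [eT_apply, if_pos hj] at this
    simp only [Finsupp.mem_support_iff]
    omega
  · intro h j
    rw [eT_apply]
    split
    · have := h ‹j ∈ T›
      simp only [Finsupp.mem_support_iff] at this
      omega
    · exact Nat.zero_le _

lemma key_one : (∏ i : Fin r, (1 - MvPowerSeries.X i : MvPowerSeries (Fin r) ℤ)) * allOnes r = 1 := by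
  classical
  have expand : (∏ i : Fin r, (1 - MvPowerSeries.X i : MvPowerSeries (Fin r) ℤ)) =
      ∑ T ∈ (Finset.univ : Finset (Fin r)).powerset,
        (-1 : MvPowerSeries (Fin r) ℤ) ^ T.card *
          MvPowerSeries.monomial (∑ i ∈ T, Finsupp.single i 1) 1 := by
    have : ∀ i : Fin r, (1 - MvPowerSeries.X i : MvPowerSeries (Fin r) ℤ) =
        (-MvPowerSeries.X i) + 1 := by intro i; ring
    simp_rw [this]
    rw [Finset.prod_add]
    refine Finset.sum_congr rfl fun T _ => ?_
    rw [Finset.prod_const_one, mul_one, ← prod_X_eq]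
    rw [show (∏ i ∈ T, (-MvPowerSeries.X i : MvPowerSeries (Fin r) ℤ)) =
      ∏ i ∈ T, ((-1 : MvPowerSeries (Fin r) ℤ) * MvPowerSeries.X i) from
        Finset.prod_congr rfl fun i _ => by ring]
    rw [Finset.prod_mul_distrib, Finset.prod_const]
  rw [expand, Finset.sum_mul]
  ext u
  rw [map_sum]
  have hterm : ∀ T ∈ (Finset.univ : Finset (Fin r)).powerset,
      MvPowerSeries.coeff u ((-1 : MvPowerSeries (Fin r) ℤ) ^ T.card *
        MvPowerSeries.monomial (∑ i ∈ T, Finsupp.single i 1) 1 * allOnes r) =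
      (-1 : ℤ) ^ T.card * (if T ⊆ u.support then 1 else 0) := by
    intro T _
    have h1 : ((-1 : MvPowerSeries (Fin r) ℤ) ^ T.card)
        = (MvPowerSeries.C : ℤ →+* MvPowerSeries (Fin r) ℤ) ((-1 : ℤ) ^ T.card) := by
      rw [map_pow, map_neg, map_one]
    rw [h1, mul_assoc, MvPowerSeries.coeff_C_mul, MvPowerSeries.coeff_monomial_mul]
    congr 1
    rw [if_congr (eT_le_iff T u) rfl rfl]
    split <;> simp [coeff_allOnes]
  rw [Finset.sum_congr rfl hterm]
  have : (∑ T ∈ (Finset.univ : Finset (Fin r)).powerset,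
      (-1 : ℤ) ^ T.card * (if T ⊆ u.support then 1 else 0)) =
      ∑ T ∈ u.support.powerset, (-1 : ℤ) ^ T.card := by
    simp_rw [mul_ite, mul_one, mul_zero]
    rw [← Finset.sum_filter]
    congr 1
    ext T
    simp [Finset.mem_powerset]
  rw [this, Finset.sum_powerset_neg_one_pow_card, MvPowerSeries.coeff_one]
  simp [Finsupp.support_eq_empty]

lemma prod_mul_upInd (a : Fin r →₀ ℕ) :
    (∏ i : Fin r, (1 - MvPowerSeries.X i)) * upInd a
      = ((MvPolynomial.monomial a (1:ℤ) : MvPolynomial (Fin r) ℤ) : MvPowerSeries (Fin r) ℤ) := by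
  rw [upInd_eq, mul_left_comm, key_one, mul_one, MvPolynomial.coe_monomial]

/-- the span of principal-upset indicators -/
def G (r : ℕ) : Submodule ℤ (MvPowerSeries (Fin r) ℤ) :=
  Submodule.span ℤ (Set.range (upInd (r := r)))

lemma exists_poly_of_mem_G {F : MvPowerSeries (Fin r) ℤ} (hF : F ∈ G r) :
    ∃ P : MvPolynomial (Fin r) ℤ,
      (∏ i : Fin r, (1 - MvPowerSeries.X i)) * F = ↑P := by
  induction hF using Submodule.span_induction with
  | mem x h =>
      obtain ⟨a, rfl⟩ := h
      exact ⟨MvPolynomial.monomial a 1, prod_mul_upInd a⟩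
  | zero => exact ⟨0, by push_cast; ring⟩
  | add x y _ _ hx hy =>
      obtain ⟨P, hP⟩ := hx
      obtain ⟨Q, hQ⟩ := hy
      exact ⟨P + Q, by rw [mul_add, hP, hQ]; push_cast; ring⟩
  | smul z x _ hx =>
      obtain ⟨P, hP⟩ := hx
      refine ⟨z • P, ?_⟩
      rw [mul_smul_comm, hP, zsmul_eq_mul, zsmul_eq_mul, MvPolynomial.coe_mul]
      congr 1
      rw [show ((z : MvPolynomial (Fin r) ℤ)) = MvPolynomial.C z by simp,
        MvPolynomial.coe_C]
      rw [← map_intCast ((MvPowerSeries.C : ℤ →+* MvPowerSeries (Fin r) ℤ)) z, Int.cast_id]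

/-- indicator series of a set -/
def sInd (S : Set (Fin r →₀ ℕ)) : MvPowerSeries (Fin r) ℤ :=
  S.indicator (fun _ => 1)

lemma sInd_apply (S : Set (Fin r →₀ ℕ)) (u : Fin r →₀ ℕ) [Decidable (u ∈ S)] :
    sInd S u = if u ∈ S then 1 else 0 := by
  simp [sInd, Set.indicator_apply]

def USet (B : Finset (Fin r →₀ ℕ)) : Set (Fin r →₀ ℕ) := {u | ∃ b ∈ B, b ≤ u}

lemma sInd_USet_mem_G (B : Finset (Fin r →₀ ℕ)) : sInd (USet B) ∈ G r := by
  classical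
  obtain ⟨n, hn⟩ : ∃ n, B.card ≤ n := ⟨B.card, le_rfl⟩
  induction n generalizing B with
  | zero =>
      have : B = ∅ := Finset.card_eq_zero.mp (Nat.le_zero.mp hn)
      subst this
      have : sInd (USet (∅ : Finset (Fin r →₀ ℕ))) = 0 := by
        funext u
        have : u ∉ USet (∅ : Finset (Fin r →₀ ℕ)) := by simp [USet]
        simp [sInd, Set.indicator_apply, this]
        rfl
      rw [this]
      exact zero_mem _
  | succ n ih =>
      rcases B.eq_empty_or_nonempty with rfl | hBne
      · exact ih ∅ (Nat.zero_le _)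
      · obtain ⟨a, B', haB', rfl⟩ : ∃ a B', a ∉ B' ∧ B = insert a B' := by
          obtain ⟨a, ha⟩ := hBne
          exact ⟨a, B.erase a, B.notMem_erase a, (Finset.insert_erase ha).symm⟩
        have hcard : B'.card ≤ n := by
          have := Finset.card_insert_of_notMem haB' ▸ hn
          omega
        have hcard2 : (B'.image (a ⊔ ·)).card ≤ n :=
          le_trans (Finset.card_image_le) hcard
        have key : sInd (USet (insert a B')) =
            upInd a + sInd (USet B') - sInd (USet (B'.image (a ⊔ ·))) := by
          funext u
          have h1 : (u ∈ USet (insert a B')) ↔ (a ≤ u ∨ u ∈ USet B') := by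
            simp [USet]
          have h2 : (u ∈ USet (B'.image (a ⊔ ·))) ↔ (a ≤ u ∧ u ∈ USet B') := by
            simp only [USet, Finset.mem_image, Set.mem_setOf_eq]
            constructor
            · rintro ⟨c, ⟨b, hb, rfl⟩, hc⟩
              exact ⟨le_trans le_sup_left hc, b, hb, le_trans le_sup_right hc⟩
            · rintro ⟨hau, b, hb, hbu⟩
              exact ⟨a ⊔ b, ⟨b, hb, rfl⟩, sup_le hau hbu⟩
          show sInd _ u = upInd a u + sInd _ u - sInd _ u
          simp only [sInd, Set.indicator_apply, upInd, h1, h2]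
          by_cases hau : a ≤ u <;> by_cases hB : u ∈ USet B' <;>
            simp [hau, hB] <;> rfl
        rw [key]
        refine sub_mem (add_mem ?_ (ih B' hcard)) (ih _ hcard2)
        exact Submodule.subset_span ⟨a, rfl⟩

/-- Dickson: every upward-closed set is a finitely generated upset -/
lemma upset_eq_USet {S : Set (Fin r →₀ ℕ)}
    (hS : ∀ u ∈ S, ∀ v, u ≤ v → v ∈ S) : ∃ B : Finset (Fin r →₀ ℕ), S = USet B := by
  classical
  set Min : Set (Fin r →₀ ℕ) := {u ∈ S | ∀ v ∈ S, v ≤ u → v = u} with hMin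
  have hanti : IsAntichain (· ≤ ·) Min := by
    rintro x ⟨hxS, hx⟩ y ⟨hyS, hy⟩ hxy hle
    exact hxy (hy x hxS hle)
  have hfin : Min.Finite :=
    hanti.finite_of_partiallyWellOrderedOn ((Set.isPWO_of_wellQuasiOrderedLE S).mono (fun x hx => hx.1))
  refine ⟨hfin.toFinset, ?_⟩
  ext u
  constructor
  · intro hu
    obtain ⟨m, hm, hmin⟩ := (IsWellFounded.wf (α := Fin r →₀ ℕ) (r := (· < ·))).has_min
      {v ∈ S | v ≤ u} ⟨u, hu, le_rfl⟩
    refine ⟨m, ?_, hm.2⟩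
    simp only [Set.Finite.mem_toFinset, hMin, Set.mem_setOf_eq]
    refine ⟨hm.1, fun v hv hvm => ?_⟩
    by_contra hne
    exact hmin v ⟨hv, le_trans hvm hm.2⟩ (lt_of_le_of_ne hvm hne)
  · rintro ⟨b, hb, hbu⟩
    simp only [Set.Finite.mem_toFinset, hMin, Set.mem_setOf_eq] at hb
    exact hS b hb.1 u hbu

lemma sInd_mem_G {S : Set (Fin r →₀ ℕ)}
    (hS : ∀ u ∈ S, ∀ v, u ≤ v → v ∈ S) : sInd S ∈ G r := by
  obtain ⟨B, rfl⟩ := upset_eq_USet hS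
  exact sInd_USet_mem_G B


open scoped Classical in
lemma rank_greedy {K V : Type} [Field K] [AddCommGroup V] [Module K V] :
    ∀ (s : ℕ) (v : Fin s → V),
      (Module.finrank K (Submodule.span K (Set.range v)) : ℤ) =
        ∑ j : Fin s, if v j ∉ Submodule.span K (v '' {i | i < j}) then (1 : ℤ) else 0 := by
  intro s
  induction s with
  | zero =>
      intro v
      rw [Set.range_eq_empty, Submodule.span_empty]
      simp [finrank_bot]
  | succ s ih =>
      intro v
      set v' : Fin s → V := v ∘ Fin.castSucc with hv'
      set x := v (Fin.last s) with hx
      set W := Submodule.span K (Set.range v') with hW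
      have : FiniteDimensional K W := FiniteDimensional.span_of_finite K (Set.finite_range v')
      have hrange : Set.range v = insert x (Set.range v') := by
        ext y
        constructor
        · rintro ⟨k, rfl⟩
          induction k using Fin.lastCases with
          | last => exact Set.mem_insert _ _
          | cast i => exact Set.mem_insert_of_mem _ ⟨i, rfl⟩
        · rintro (rfl | ⟨i, rfl⟩)
          · exact ⟨Fin.last s, rfl⟩
          · exact ⟨Fin.castSucc i, rfl⟩
      have himage : ∀ i : Fin s, v '' {k | k < Fin.castSucc i} = v' '' {k | k < i} := by
        intro i
        ext y
        constructor
        · rintro ⟨k, hk, rfl⟩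
          have hk' : (k : ℕ) < (i : ℕ) := by simpa [Fin.lt_def] using hk
          have hks : (k : ℕ) < s := lt_trans hk' i.isLt
          refine ⟨⟨k, hks⟩, hk', ?_⟩
          have : Fin.castSucc ⟨(k : ℕ), hks⟩ = k := Fin.ext (by simp)
          simp [hv', this]
        · rintro ⟨k, hk, rfl⟩
          exact ⟨Fin.castSucc k, Fin.castSucc_lt_castSucc_iff.mpr hk, rfl⟩
      have hlastimage : v '' {k | k < Fin.last s} = Set.range v' := by
        ext y
        constructor
        · rintro ⟨k, hk, rfl⟩
          have hks : (k : ℕ) < s := hk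
          have : Fin.castSucc ⟨(k : ℕ), hks⟩ = k := Fin.ext (by simp)
          exact ⟨⟨(k : ℕ), hks⟩, by simp [hv', this]⟩
        · rintro ⟨k, rfl⟩
          exact ⟨Fin.castSucc k, by simp [Fin.lt_def, k.isLt], rfl⟩
      rw [Fin.sum_univ_castSucc]
      have hPcast : ∀ i : Fin s,
          (if v (Fin.castSucc i) ∉ Submodule.span K (v '' {k | k < Fin.castSucc i})
            then (1:ℤ) else 0)
          = (if v' i ∉ Submodule.span K (v' '' {k | k < i}) then (1:ℤ) else 0) := by
        intro i
        rw [himage i, show v' i = v i.castSucc from rfl]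
      simp_rw [hPcast]
      rw [← ih v', hlastimage, ← hW]
      rw [hrange, Submodule.span_insert, ← hW, ← hx]
      by_cases hxW : x ∈ W
      · rw [sup_eq_right.mpr ((Submodule.span_singleton_le_iff_mem _ _).mpr hxW)]
        simp [hxW]
      · have hx0 : x ≠ 0 := fun h => hxW (h ▸ W.zero_mem)
        have hinf : (K ∙ x) ⊓ W = ⊥ := by
          rw [eq_bot_iff]
          rintro y ⟨hy1, hy2⟩
          obtain ⟨c, rfl⟩ := Submodule.mem_span_singleton.mp hy1
          rcases eq_or_ne c 0 with rfl | hc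
          · simp
          · exact absurd (by
              have : (c⁻¹ • (c • x)) ∈ W := W.smul_mem _ hy2
              rwa [smul_smul, inv_mul_cancel₀ hc, one_smul] at this) hxW
        have hfd : FiniteDimensional K (K ∙ x) := FiniteDimensional.span_of_finite K (Set.finite_singleton x)
        have hcount := Submodule.finrank_sup_add_finrank_inf_eq (K ∙ x) W
        rw [hinf, finrank_bot, finrank_span_singleton hx0] at hcount
        simp only [hxW, not_false_eq_true, if_true]
        push_cast
        omega

end


set_option maxHeartbeats 1000000 in
theorem statement3 (K : Type) [Field K] (r : ℕ)
    (M : Type) [AddCommGroup M] [Module (MvPolynomial (Fin r) K) M]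
    [Module K M] [IsScalarTower K (MvPolynomial (Fin r) K) M]
    [Module.Finite (MvPolynomial (Fin r) K) M]
    (ℳ : (Fin r →₀ ℕ) → Submodule K M)
    (hM : DirectSum.IsInternal ℳ)
    (hMgr : ∀ (u v : Fin r →₀ ℕ) (c : K) (m : M), m ∈ ℳ v →
      (MvPolynomial.monomial u c) • m ∈ ℳ (u + v))
    -- `HS` is the multigraded Hilbert series of `M`
    (HS : MvPowerSeries (Fin r) ℤ)
    (hHS : ∀ u : Fin r →₀ ℕ, MvPowerSeries.coeff u HS = (Module.finrank K (ℳ u) : ℤ)) :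
    ∃ P : MvPolynomial (Fin r) ℤ,
      (∏ i : Fin r, (1 - MvPowerSeries.X i)) * HS = ↑P := by
  classical
  set S := MvPolynomial (Fin r) K with hSdef
  -- the decomposition equivalence and projections
  set e := LinearEquiv.ofBijective (DirectSum.coeLinearMap ℳ) hM with he
  set πL : (Fin r →₀ ℕ) → (M →ₗ[K] M) := fun u =>
    (ℳ u).subtype ∘ₗ (DirectSum.component K (Fin r →₀ ℕ) (fun d => ℳ d) u) ∘ₗ
      (e.symm : M →ₗ[K] DirectSum (Fin r →₀ ℕ) fun d => ↥(ℳ d)) with hπL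
  have hπapp : ∀ (u : Fin r →₀ ℕ) (m : M), πL u m = ↑(e.symm m u) := by
    intro u m; rfl
  have hπ_mem : ∀ (u : Fin r →₀ ℕ) (m : M), πL u m ∈ ℳ u := by
    intro u m; rw [hπapp]; exact (e.symm m u).2
  have hπ1 : ∀ {u : Fin r →₀ ℕ} {m : M}, m ∈ ℳ u → πL u m = m := by
    intro u m hm
    rw [hπapp, hM.ofBijective_coeLinearMap_of_mem hm]
  have hπ2 : ∀ {u d : Fin r →₀ ℕ} {m : M}, m ∈ ℳ d → d ≠ u → πL u m = 0 := by
    intro u d m hm hne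
    rw [hπapp, hM.ofBijective_coeLinearMap_of_mem_ne hne hm, Submodule.coe_zero]
  have hπ3 : ∀ m : M, m = ∑ d ∈ (e.symm m).support, πL d m := by
    intro m
    calc m = DirectSum.coeLinearMap ℳ (e.symm m) := (e.apply_symm_apply m).symm
    _ = DirectSum.coeLinearMap ℳ (∑ d ∈ (e.symm m).support,
          (DirectSum.of (fun d => ↥(ℳ d)) d) (e.symm m d)) := by
            rw [DirectSum.sum_support_of]
    _ = ∑ d ∈ (e.symm m).support,
          DirectSum.coeLinearMap ℳ ((DirectSum.of (fun d => ↥(ℳ d)) d) (e.symm m d)) :=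
            map_sum _ _ _
    _ = ∑ d ∈ (e.symm m).support, πL d m := by
          refine Finset.sum_congr rfl fun d _ => ?_
          rw [hπapp, DirectSum.coeLinearMap_of]
  -- homogeneous generators
  obtain ⟨T, hT⟩ := Module.Finite.fg_top (R := S) (M := M)
  set gens : Finset ((Fin r →₀ ℕ) × M) :=
    T.biUnion fun t => (e.symm t).support.image fun d => (d, πL d t) with hgens
  have hgens_mem : ∀ p ∈ gens, p.2 ∈ ℳ p.1 := by
    intro p hp
    rw [hgens, Finset.mem_biUnion] at hp
    obtain ⟨t, _, hp⟩ := hp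
    rw [Finset.mem_image] at hp
    obtain ⟨d, _, rfl⟩ := hp
    exact hπ_mem d t
  have hspan : Submodule.span S ((gens.image Prod.snd : Finset M) : Set M) = ⊤ := by
    refine top_unique ?_
    rw [← hT]
    refine Submodule.span_le.mpr fun t ht => ?_
    rw [hπ3 t]
    refine Submodule.sum_mem _ fun d hd => Submodule.subset_span ?_
    rw [hgens]
    exact Finset.mem_coe.mpr (Finset.mem_image.mpr
      ⟨(d, πL d t), Finset.mem_biUnion.mpr ⟨t, ht, Finset.mem_image.mpr ⟨d, hd, rfl⟩⟩, rfl⟩)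
  set s := gens.card with hs
  set g : Fin s → ((Fin r →₀ ℕ) × M) := fun j => (gens.equivFin.symm j : (Fin r →₀ ℕ) × M)
    with hg
  set a : Fin s → (Fin r →₀ ℕ) := fun j => (g j).1 with ha
  set mj : Fin s → M := fun j => (g j).2 with hmj
  have hmem : ∀ j, mj j ∈ ℳ (a j) := fun j => hgens_mem _ (gens.equivFin.symm j).2
  have hsnd : ∀ x ∈ gens.image Prod.snd, ∃ j, x = mj j := by
    intro x hx
    rw [Finset.mem_image] at hx
    obtain ⟨p, hp, rfl⟩ := hx
    exact ⟨gens.equivFin ⟨p, hp⟩, by rw [hmj, hg]; simp⟩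
  -- scalar commuting
  have hsmul_comm : ∀ (c : K) (p : S) (y : M), p • (c • y) = c • (p • y) := by
    intro c p y
    rw [← algebraMap_smul S c y, ← mul_smul, ← Algebra.commutes c p, mul_smul,
      algebraMap_smul]
  -- the K-span of all monomial translates of the generators is everything
  set genset : Set M :=
    {y | ∃ (j : Fin s) (w' : Fin r →₀ ℕ), y = (MvPolynomial.monomial w' (1:K)) • mj j}
    with hgenset
  set N0 : Submodule K M := Submodule.span K genset with hN0
  have hN0_smul : ∀ (p : S), ∀ y ∈ N0, p • y ∈ N0 := by
    intro p y hy
    induction hy using Submodule.span_induction with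
    | mem y hmemy =>
        obtain ⟨j, w', rfl⟩ := hmemy
        induction p using MvPolynomial.induction_on' with
        | monomial u c =>
            rw [← mul_smul, MvPolynomial.monomial_mul, mul_one,
              show (MvPolynomial.monomial (u + w') c : S)
                = c • MvPolynomial.monomial (u + w') (1:K) by
                  rw [MvPolynomial.smul_monomial, smul_eq_mul, mul_one],
              smul_assoc]
            exact N0.smul_mem c (Submodule.subset_span ⟨j, u + w', rfl⟩)
        | add p q hp hq =>
            rw [add_smul]
            exact N0.add_mem hp hq
    | zero => rw [smul_zero]; exact N0.zero_mem
    | add y z _ _ hy hz => rw [smul_add]; exact N0.add_mem hy hz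
    | smul c y _ hy => rw [hsmul_comm]; exact N0.smul_mem c hy
  have hN0_top : ∀ m : M, m ∈ N0 := by
    set N' : Submodule S M :=
      { carrier := ↑N0
        add_mem' := fun h1 h2 => N0.add_mem h1 h2
        zero_mem' := N0.zero_mem
        smul_mem' := fun p y hy => hN0_smul p y hy } with hN'
    have hle : Submodule.span S ((gens.image Prod.snd : Finset M) : Set M) ≤ N' := by
      refine Submodule.span_le.mpr fun x hx => ?_
      obtain ⟨j, rfl⟩ := hsnd x hx
      show mj j ∈ N0
      have : (MvPolynomial.monomial (0 : Fin r →₀ ℕ) (1:K)) • mj j = mj j := by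
        rw [MvPolynomial.monomial_zero', MvPolynomial.C_1, one_smul]
      exact this ▸ Submodule.subset_span ⟨j, 0, rfl⟩
    rw [hspan] at hle
    intro m
    exact hle trivial
  -- the spanning family in each degree
  set w : (Fin r →₀ ℕ) → Fin s → M := fun u j =>
    if a j ≤ u then (MvPolynomial.monomial (u - a j) (1:K)) • mj j else 0 with hw
  have hw_mem : ∀ u j, w u j ∈ ℳ u := by
    intro u j
    rw [hw]
    dsimp only
    split
    · rename_i h
      have := hMgr (u - a j) (a j) 1 (mj j) (hmem j)
      rwa [tsub_add_cancel_of_le h] at this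
    · exact (ℳ u).zero_mem
  have hspan_u : ∀ u, ℳ u = Submodule.span K (Set.range (w u)) := by
    intro u
    refine le_antisymm ?_ (Submodule.span_le.mpr ?_)
    swap
    · rintro y ⟨j, rfl⟩
      exact hw_mem u j
    intro m hm
    have hπum : πL u m = m := hπ1 hm
    have hmap : m ∈ Submodule.map (πL u) N0 := ⟨m, hN0_top m, hπum⟩
    rw [hN0, Submodule.map_span] at hmap
    have himg : (πL u) '' genset ⊆ insert 0 (Set.range (w u)) := by
      rintro y ⟨z, ⟨j, w', rfl⟩, rfl⟩
      have hz : (MvPolynomial.monomial w' (1:K)) • mj j ∈ ℳ (w' + a j) :=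
        hMgr w' (a j) 1 (mj j) (hmem j)
      by_cases hd : w' + a j = u
      · right
        refine ⟨j, ?_⟩
        have hle : a j ≤ u := hd ▸ le_add_self
        rw [hw]
        dsimp only
        rw [if_pos hle, show u - a j = w' by rw [← hd, add_tsub_cancel_right]]
        exact (hπ1 (hd ▸ hz)).symm ▸ rfl
      · left
        exact hπ2 hz hd
    have hfin := Submodule.span_mono himg hmap
    rwa [Submodule.span_insert_zero] at hfin
  set E : Fin s → Set (Fin r →₀ ℕ) := fun j =>
    {u | a j ≤ u ∧ w u j ∈ Submodule.span K (w u '' {i | i < j})} with hE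
  have hq : ∀ (u u' : Fin r →₀ ℕ), u ≤ u' → ∀ i,
      (MvPolynomial.monomial (u' - u) (1:K)) • w u i = if a i ≤ u then w u' i else 0 := by
    intro u u' hle i
    by_cases h : a i ≤ u
    · rw [if_pos h, hw]
      dsimp only
      rw [if_pos h, if_pos (le_trans h hle), ← mul_smul, MvPolynomial.monomial_mul, mul_one]
      have key : u' - u + (u - a i) = u' - a i := by
        ext k
        have h1 := Finsupp.le_def.mp h k
        have h2 := Finsupp.le_def.mp hle k
        simp only [Finsupp.add_apply, Finsupp.tsub_apply]
        omega
      rw [key]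
    · rw [if_neg h, hw]
      dsimp only
      rw [if_neg h, smul_zero]
  have hE_upset : ∀ (j : Fin s), ∀ u ∈ E j, ∀ u', u ≤ u' → u' ∈ E j := by
    intro j u hu u' hle
    obtain ⟨h1, h2⟩ := hu
    refine ⟨le_trans h1 hle, ?_⟩
    set q : S := MvPolynomial.monomial (u' - u) (1:K) with hqdef
    set L : M →ₗ[K] M :=
      { toFun := fun y => q • y
        map_add' := fun y z => smul_add q y z
        map_smul' := fun c y => hsmul_comm c q y } with hL
    have hwj : w u' j = L (w u j) := by
      show w u' j = q • w u j
      rw [hq u u' hle j, if_pos h1]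
    rw [hwj]
    have hmem2 : L (w u j) ∈ Submodule.map L (Submodule.span K (w u '' {i | i < j})) :=
      ⟨w u j, h2, rfl⟩
    rw [Submodule.map_span] at hmem2
    have himg : L '' (w u '' {i | i < j}) ⊆ insert 0 (w u' '' {i | i < j}) := by
      rintro y ⟨z, ⟨i, hi, rfl⟩, rfl⟩
      show q • w u i ∈ _
      rw [hq u u' hle i]
      split
      · exact Set.mem_insert_of_mem _ ⟨i, hi, rfl⟩
      · exact Set.mem_insert _ _
    have hfin := Submodule.span_mono himg hmem2
    rwa [Submodule.span_insert_zero] at hfin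
  have hHSfun : HS = ∑ j : Fin s, (upInd (a j) - sInd (E j)) := by
    apply MvPowerSeries.ext
    intro u
    rw [hHS u, map_sum]
    have hcoe : ∀ j : Fin s, MvPowerSeries.coeff u (upInd (a j) - sInd (E j))
        = (if a j ≤ u then (1:ℤ) else 0) - (if u ∈ E j then (1:ℤ) else 0) := by
      intro j
      rw [map_sub, coeff_upInd]
      congr 1
      rw [MvPowerSeries.coeff_apply, sInd_apply]
    rw [Finset.sum_congr rfl fun j _ => hcoe j]
    rw [hspan_u u, rank_greedy s (w u)]
    refine Finset.sum_congr rfl fun j _ => ?_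
    by_cases hle : a j ≤ u
    · by_cases hdep : w u j ∈ Submodule.span K (w u '' {i | i < j})
      · have huE : u ∈ E j := ⟨hle, hdep⟩
        simp [hdep, hle, huE]
      · have huE : u ∉ E j := fun hc => hdep hc.2
        simp [hdep, hle, huE]
    · have hz : w u j = 0 := by
        rw [hw]
        dsimp only
        rw [if_neg hle]
      have hdep : w u j ∈ Submodule.span K (w u '' {i | i < j}) := by
        rw [hz]
        exact Submodule.zero_mem _
      have huE : u ∉ E j := fun hc => hle hc.1
      simp [hdep, hle, huE]
  rw [hHSfun]
  refine exists_poly_of_mem_G ?_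
  exact Submodule.sum_mem _ fun j _ => sub_mem (Submodule.subset_span ⟨a j, rfl⟩)
    (sInd_mem_G (fun u hu v huv => hE_upset j u hu v huv))
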